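/- arXiv:2210.13027 — 2 statements merged into one kernel-verified Lean document; each statement's English description precedes it below -/
import Mathlib

section
/- Let (E^{(m)}) be positive random variables adapted to a filtration (F_m) such that |log E^{(m)}| ≤ s_m almost surely with Σ s_m²/m² < ∞, and such that W_m := E[log E^{(m)} | F_{m−1}] ≥ r_m > 0 with limsup_{M→∞} (1/M) Σ_{m=1}^M r_m > 0. Then for every α ∈ (0,1], P(∃ M, ∏_{m=1}^M E^{(m)} ≥ α⁻¹) = 1. -/
open MeasureTheory Filter
open scoped ENNReal

lemma kron_aux {x : ℕ → ℝ} {L : ℝ}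
    (h : Tendsto (fun N : ℕ => ∑ k ∈ Finset.Icc 1 N, (k:ℝ)⁻¹ * x k) atTop (nhds L)) :
    Tendsto (fun N : ℕ => (N:ℝ)⁻¹ * ∑ k ∈ Finset.Icc 1 N, x k) atTop (nhds 0) := by
  set b : ℕ → ℝ := fun N => ∑ k ∈ Finset.Icc 1 N, (k:ℝ)⁻¹ * x k with hb
  have key : ∀ N : ℕ, ∑ k ∈ Finset.Icc 1 N, x k
      = (N:ℝ) * b N - ∑ j ∈ Finset.range N, b j := by
    intro N
    induction N with
    | zero => simp [hb]
    | succ N ih =>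
      have h1 : b (N+1) = b N + (((N:ℝ)+1))⁻¹ * x (N+1) := by
        show (∑ k ∈ Finset.Icc 1 (N+1), (k:ℝ)⁻¹ * x k) = _
        rw [Finset.sum_Icc_succ_top (by omega : 1 ≤ N + 1)]
        push_cast
        ring
      rw [Finset.sum_Icc_succ_top (by omega : 1 ≤ N + 1), ih, Finset.sum_range_succ, h1]
      have hN : ((N:ℝ)+1) ≠ 0 := by positivity
      push_cast
      field_simp
      ring
  have h2 : Tendsto (fun N : ℕ => b N - (N:ℝ)⁻¹ * ∑ j ∈ Finset.range N, b j) atTop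
      (nhds (L - L)) := h.sub h.cesaro
  rw [sub_self] at h2
  apply h2.congr'
  filter_upwards [eventually_ge_atTop 1] with N hN
  have hN' : (N:ℝ) ≠ 0 := by positivity
  rw [key N]
  field_simp

/-- Consistency of the sequential split likelihood ratio test: if `|log E^{(m)}| ≤ s_m` a.s.
with `Σ s_m²/m² < ∞`, and the conditional expected log e-values
`W_m = E[log E^{(m)} | F_{m−1}]` satisfy `W_m ≥ r_m > 0` with
`limsup (1/M) Σ_{m=1}^M r_m > 0`, then for every `α ∈ (0,1]` the product e-process crosses
`α⁻¹` almost surely. -/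
theorem stmt_13 {Ω : Type*} {m0 : MeasurableSpace Ω} (μ : Measure Ω) [IsProbabilityMeasure μ]
    (ℱ : Filtration ℕ m0) (E : ℕ → Ω → ℝ) (s r : ℕ → ℝ)
    (hadapt : Adapted ℱ E) (hpos : ∀ m ω, 0 < E m ω)
    (hint : ∀ m, Integrable (fun ω => Real.log (E m ω)) μ)
    (hbd : ∀ m : ℕ, 1 ≤ m → ∀ᵐ ω ∂μ, |Real.log (E m ω)| ≤ s m)
    (hsum : Summable fun m => (s m) ^ 2 / (m : ℝ) ^ 2)
    (hr : ∀ m : ℕ, 1 ≤ m → 0 < r m)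
    (hW : ∀ m : ℕ, 1 ≤ m →
      ∀ᵐ ω ∂μ, r m ≤ (μ[fun ω' => Real.log (E m ω') | ℱ (m - 1)]) ω)
    (hlimsup : 0 < atTop.limsup (fun M : ℕ => (1 / (M : ℝ)) * ∑ m ∈ Finset.Icc 1 M, r m))
    (α : ℝ) (hα0 : 0 < α) (hα1 : α ≤ 1) :
    μ {ω | ∃ M : ℕ, α⁻¹ ≤ ∏ m ∈ Finset.Icc 1 M, E m ω} = 1 := by
  classical
  -- Notation
  set X : ℕ → Ω → ℝ := fun m ω => Real.log (E m ω) with hX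
  set W : ℕ → Ω → ℝ := fun m => μ[X m | ℱ (m - 1)] with hWdef
  set D : ℕ → Ω → ℝ := fun m => X m - W m with hD
  set f : ℕ → Ω → ℝ := fun N => ∑ m ∈ Finset.Icc 1 N, (m:ℝ)⁻¹ • D m with hf
  -- basic measurability / integrability
  have hXsm : ∀ m, StronglyMeasurable[ℱ m] (X m) := fun m =>
    (Measurable.log (hadapt m)).stronglyMeasurable
  have hWint : ∀ m, Integrable (W m) μ := fun m => integrable_condExp
  have hDint : ∀ m, Integrable (D m) μ := fun m => (hint m).sub integrable_condExp
  have hDsm : ∀ m, StronglyMeasurable[ℱ m] (D m) := fun m =>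
    (hXsm m).sub (stronglyMeasurable_condExp.mono (ℱ.mono (Nat.sub_le m 1)))
  have hfeq : ∀ N, f N = fun ω => ∑ m ∈ Finset.Icc 1 N, (m:ℝ)⁻¹ * D m ω := by
    intro N; ext ω; simp [hf, Finset.sum_apply]
  have hfsm : ∀ N, StronglyMeasurable[ℱ N] (f N) := by
    intro N
    rw [hfeq]
    apply Finset.stronglyMeasurable_fun_sum
    intro m hm
    exact ((hDsm m).mono (ℱ.mono (Finset.mem_Icc.1 hm).2)).const_mul _
  have hfint : ∀ N, Integrable (f N) μ := by
    intro N
    rw [hfeq]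
    exact integrable_finset_sum _ fun m _ => ((hDint m).const_mul _)
  -- conditional expectation of increments is zero
  have hD0 : ∀ N : ℕ, μ[D (N+1) | ℱ N] =ᵐ[μ] 0 := by
    intro N
    have h1 : μ[D (N+1) | ℱ N] =ᵐ[μ] μ[X (N+1) | ℱ N] - μ[W (N+1) | ℱ N] :=
      condExp_sub (hint (N+1)) (hWint (N+1)) _
    have h3 : W (N+1) = μ[X (N+1) | ℱ N] := rfl
    have h2 : μ[μ[X (N+1) | ℱ N] | ℱ N] = μ[X (N+1) | ℱ N] :=
      condExp_of_stronglyMeasurable (ℱ.le N) stronglyMeasurable_condExp integrable_condExp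
    filter_upwards [h1] with ω hω
    rw [Pi.zero_apply, hω, Pi.sub_apply, h3, h2, sub_self]
  -- f is a martingale
  have hmart : Martingale f ℱ μ := by
    refine martingale_nat hfsm hfint fun N => ?_
    have hstep : f (N+1) = f N + (((N:ℝ)+1))⁻¹ • D (N+1) := by
      rw [hf]
      ext ω
      simp only [Finset.sum_apply, Pi.add_apply, Pi.smul_apply, smul_eq_mul]
      rw [Finset.sum_Icc_succ_top (by omega : 1 ≤ N + 1)]
      push_cast
      ring
    have h1 : μ[f (N+1) | ℱ N]
        =ᵐ[μ] μ[f N | ℱ N] + μ[(((N:ℝ)+1))⁻¹ • D (N+1) | ℱ N] := by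
      rw [hstep]
      exact condExp_add (hfint N) ((hDint (N+1)).smul _) _
    have h2 : μ[f N | ℱ N] = f N :=
      condExp_of_stronglyMeasurable (ℱ.le N) (hfsm N) (hfint N)
    have h3 : μ[(((N:ℝ)+1))⁻¹ • D (N+1) | ℱ N]
        =ᵐ[μ] (((N:ℝ)+1))⁻¹ • μ[D (N+1) | ℱ N] := condExp_smul _ _ _
    filter_upwards [h1, h3, hD0 N] with ω hω1 hω3 hω0
    simp only [Pi.add_apply, Pi.smul_apply] at *
    rw [hω1, hω3, h2, hω0]
    simp
  -- pointwise step identity for f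
  have hstep : ∀ N : ℕ, f (N+1) = f N + (((N:ℝ)+1))⁻¹ • D (N+1) := by
    intro N
    rw [hf]
    ext ω
    simp only [Finset.sum_apply, Pi.add_apply, Pi.smul_apply, smul_eq_mul]
    rw [Finset.sum_Icc_succ_top (by omega : 1 ≤ N + 1)]
    push_cast
    ring
  -- a.e. bounds
  haveI : (MeasureTheory.ae μ).NeBot := ae_neBot.2 (IsProbabilityMeasure.ne_zero μ)
  have hs0 : ∀ m, 1 ≤ m → 0 ≤ s m := by
    intro m hm
    obtain ⟨ω, hω⟩ := (hbd m hm).exists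
    exact le_trans (abs_nonneg _) hω
  have hWbd : ∀ m, 1 ≤ m → ∀ᵐ ω ∂μ, |W m ω| ≤ s m := by
    intro m hm
    have h := ae_bdd_condExp_of_ae_bdd (m := ℱ (m-1)) (μ := μ)
      (R := ⟨s m, hs0 m hm⟩) (f := X m) (by exact_mod_cast hbd m hm)
    exact_mod_cast h
  have hDbd : ∀ m, 1 ≤ m → ∀ᵐ ω ∂μ, |D m ω| ≤ 2 * s m := by
    intro m hm
    filter_upwards [hbd m hm, hWbd m hm] with ω h1 h2
    have : D m ω = X m ω - W m ω := rfl
    rw [this]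
    calc |X m ω - W m ω| ≤ |X m ω| + |W m ω| := abs_sub _ _
      _ ≤ 2 * s m := by simp only [hX] at h1 ⊢; linarith
  have hDball : ∀ᵐ ω ∂μ, ∀ m, 1 ≤ m → |D m ω| ≤ 2 * s m := by
    rw [ae_all_iff]
    intro m
    by_cases hm : 1 ≤ m
    · filter_upwards [hDbd m hm] with ω h _; exact h
    · exact Eventually.of_forall fun ω h => absurd h hm
  -- a.e. bound on f N
  set B : ℕ → ℝ := fun N => ∑ m ∈ Finset.Icc 1 N, (m:ℝ)⁻¹ * (2 * s m) with hB
  have hfbd : ∀ N, ∀ᵐ ω ∂μ, |f N ω| ≤ B N := by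
    intro N
    filter_upwards [hDball] with ω hω
    rw [hfeq]
    refine le_trans (Finset.abs_sum_le_sum_abs _ _) (Finset.sum_le_sum fun m hm => ?_)
    have hm1 : 1 ≤ m := (Finset.mem_Icc.1 hm).1
    rw [abs_mul, abs_of_nonneg (by positivity : (0:ℝ) ≤ (m:ℝ)⁻¹)]
    exact mul_le_mul_of_nonneg_left (hω m hm1) (by positivity)
  -- integrability of squares and products
  have hfmeas : ∀ N, AEStronglyMeasurable (f N) μ :=
    fun N => ((hfsm N).mono (ℱ.le N)).aestronglyMeasurable
  have hDmeas : ∀ m, AEStronglyMeasurable (D m) μ :=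
    fun m => ((hDsm m).mono (ℱ.le m)).aestronglyMeasurable
  have hsqint : ∀ N, Integrable (fun ω => (f N ω)^2) μ := by
    intro N
    refine Integrable.mono' (integrable_const ((B N)^2))
      ((hfmeas N).pow 2) ?_
    filter_upwards [hfbd N] with ω hω
    have h0 : (0:ℝ) ≤ B N := le_trans (abs_nonneg _) hω
    calc ‖(f N ω)^2‖ = |f N ω|^2 := by rw [Real.norm_eq_abs, abs_pow]
      _ ≤ (B N)^2 := pow_le_pow_left₀ (abs_nonneg _) hω 2
  have hDsqint : ∀ m, 1 ≤ m → Integrable (fun ω => (D m ω)^2) μ := by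
    intro m hm
    refine Integrable.mono' (integrable_const ((2 * s m)^2)) ((hDmeas m).pow 2) ?_
    filter_upwards [hDbd m hm] with ω hω
    calc ‖(D m ω)^2‖ = |D m ω|^2 := by rw [Real.norm_eq_abs, abs_pow]
      _ ≤ (2 * s m)^2 := pow_le_pow_left₀ (abs_nonneg _) hω 2
  have hprodint : ∀ N, Integrable (fun ω => f N ω * D (N+1) ω) μ := by
    intro N
    refine Integrable.mono' (integrable_const (B N * (2 * s (N+1))))
      ((hfmeas N).mul (hDmeas (N+1))) ?_
    filter_upwards [hfbd N, hDbd (N+1) (by omega)] with ω h1 h2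
    rw [Real.norm_eq_abs, abs_mul]
    exact mul_le_mul h1 h2 (abs_nonneg _) (le_trans (abs_nonneg _) h1)
  -- cross term vanishes
  have hcross : ∀ N, ∫ ω, f N ω * D (N+1) ω ∂μ = 0 := by
    intro N
    have hmul : μ[f N * D (N+1) | ℱ N] =ᵐ[μ] f N * μ[D (N+1) | ℱ N] :=
      condExp_mul_of_stronglyMeasurable_left (hfsm N) (hprodint N) (hDint (N+1))
    calc ∫ ω, f N ω * D (N+1) ω ∂μ
        = ∫ ω, (μ[f N * D (N+1) | ℱ N]) ω ∂μ := (integral_condExp (ℱ.le N)).symm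
      _ = ∫ ω, (f N * μ[D (N+1) | ℱ N]) ω ∂μ := integral_congr_ae hmul
      _ = ∫ _ω, (0:ℝ) ∂μ := integral_congr_ae (by
            filter_upwards [hD0 N] with ω h
            simp only [Pi.mul_apply, h, Pi.zero_apply, mul_zero])
      _ = 0 := integral_zero _ _
  -- L² bound by induction
  have hVbd : ∀ N, ∫ ω, (f N ω)^2 ∂μ
      ≤ ∑ m ∈ Finset.Icc 1 N, 4 * (s m ^ 2 / (m:ℝ)^2) := by
    intro N
    induction N with
    | zero => simp [hf]
    | succ N ih =>
      have hc : (0:ℝ) < (N:ℝ)+1 := by positivity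
      have hexp : ∀ ω, (f (N+1) ω)^2
          = (f N ω)^2 + (2 * (((N:ℝ)+1))⁻¹) * (f N ω * D (N+1) ω)
            + (((N:ℝ)+1))⁻¹^2 * (D (N+1) ω)^2 := by
        intro ω
        rw [hstep N]
        simp only [Pi.add_apply, Pi.smul_apply, smul_eq_mul]
        ring
      have hint1 : Integrable (fun ω => (f N ω)^2
          + (2 * (((N:ℝ)+1))⁻¹) * (f N ω * D (N+1) ω)) μ :=
        (hsqint N).add ((hprodint N).const_mul _)
      have hDi : Integrable (fun ω => (((N:ℝ)+1))⁻¹^2 * (D (N+1) ω)^2) μ :=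
        (hDsqint (N+1) (by omega)).const_mul _
      have hDint2 : ∫ ω, (D (N+1) ω)^2 ∂μ ≤ (2 * s (N+1))^2 := by
        have := integral_mono_ae (hDsqint (N+1) (by omega)) (integrable_const _)
          (by filter_upwards [hDbd (N+1) (by omega)] with ω hω
              calc (D (N+1) ω)^2 = |D (N+1) ω|^2 := (sq_abs _).symm
                _ ≤ (2 * s (N+1))^2 := pow_le_pow_left₀ (abs_nonneg _) hω 2)
        simpa using this
      calc ∫ ω, (f (N+1) ω)^2 ∂μ
          = ∫ ω, ((f N ω)^2 + (2 * (((N:ℝ)+1))⁻¹) * (f N ω * D (N+1) ω)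
              + (((N:ℝ)+1))⁻¹^2 * (D (N+1) ω)^2) ∂μ := by
            exact integral_congr_ae (Eventually.of_forall fun ω => hexp ω)
        _ = (∫ ω, ((f N ω)^2 + (2 * (((N:ℝ)+1))⁻¹) * (f N ω * D (N+1) ω)) ∂μ)
              + ∫ ω, (((N:ℝ)+1))⁻¹^2 * (D (N+1) ω)^2 ∂μ := integral_add hint1 hDi
        _ = (∫ ω, (f N ω)^2 ∂μ) + (2 * (((N:ℝ)+1))⁻¹) * (∫ ω, f N ω * D (N+1) ω ∂μ)
              + (((N:ℝ)+1))⁻¹^2 * ∫ ω, (D (N+1) ω)^2 ∂μ := by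
            rw [integral_add (hsqint N) ((hprodint N).const_mul _),
              integral_const_mul, integral_const_mul]
        _ = (∫ ω, (f N ω)^2 ∂μ) + (((N:ℝ)+1))⁻¹^2 * ∫ ω, (D (N+1) ω)^2 ∂μ := by
            rw [hcross N]; ring
        _ ≤ (∑ m ∈ Finset.Icc 1 N, 4 * (s m ^ 2 / (m:ℝ)^2))
              + (((N:ℝ)+1))⁻¹^2 * (2 * s (N+1))^2 := by
            refine add_le_add ih (mul_le_mul_of_nonneg_left hDint2 (by positivity))
        _ = ∑ m ∈ Finset.Icc 1 (N+1), 4 * (s m ^ 2 / (m:ℝ)^2) := by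
            rw [Finset.sum_Icc_succ_top (by omega : 1 ≤ N + 1)]
            push_cast
            congr 1
            rw [div_eq_mul_inv, ← inv_pow]
            ring
  -- uniform L¹ bound
  have hsum4 : Summable (fun m => 4 * (s m ^ 2 / (m:ℝ)^2)) := hsum.mul_left 4
  set C : ℝ := ∑' m, 4 * (s m ^ 2 / (m:ℝ)^2) with hC
  have hVC : ∀ N, ∫ ω, (f N ω)^2 ∂μ ≤ C := by
    intro N
    refine le_trans (hVbd N) (Summable.sum_le_tsum _ (fun m _ => by positivity) hsum4)
  set K : ℝ := (1 + C)/2 with hK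
  have hL1 : ∀ N, ∫ ω, |f N ω| ∂μ ≤ K := by
    intro N
    have h1 : ∀ ω, |f N ω| ≤ (1 + (f N ω)^2)/2 := by
      intro ω
      nlinarith [sq_nonneg (|f N ω| - 1), sq_abs (f N ω)]
    calc ∫ ω, |f N ω| ∂μ ≤ ∫ ω, (1 + (f N ω)^2)/2 ∂μ :=
          integral_mono (hfint N).abs (((integrable_const 1).add (hsqint N)).div_const 2)
            h1
      _ = (1 + ∫ ω, (f N ω)^2 ∂μ)/2 := by
          rw [integral_div, integral_add (integrable_const 1) (hsqint N)]
          simp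
      _ ≤ K := by rw [hK]; linarith [hVC N]
  have hbdd : ∀ N, eLpNorm (f N) 1 μ ≤ (K.toNNReal : ℝ≥0∞) := by
    intro N
    rw [eLpNorm_one_eq_lintegral_enorm,
      ← ofReal_integral_norm_eq_lintegral_enorm (hfint N)]
    refine le_trans (ENNReal.ofReal_le_ofReal ?_) le_rfl
    simpa [Real.norm_eq_abs] using hL1 N
  -- a.s. convergence of the martingale
  have hconv : ∀ᵐ ω ∂μ, ∃ c, Tendsto (fun n => f n ω) atTop (nhds c) :=
    hmart.submartingale.exists_ae_tendsto_of_bdd hbdd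
  -- the limsup hypothesis
  set u : ℕ → ℝ := fun M => (1 / (M : ℝ)) * ∑ m ∈ Finset.Icc 1 M, r m with hu
  have hu0 : ∀ M, 0 ≤ u M := by
    intro M
    apply mul_nonneg (by positivity)
    exact Finset.sum_nonneg fun m hm => (hr m (Finset.mem_Icc.1 hm).1).le
  set L : ℝ := atTop.limsup u with hL
  have hL0 : 0 < L := hlimsup
  have hco : IsCoboundedUnder (· ≤ ·) atTop u :=
    isCoboundedUnder_le_of_le atTop hu0
  have hfreq : ∃ᶠ M in atTop, L/2 < u M :=
    frequently_lt_of_lt_limsup hco (by linarith)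
  -- W ≥ r a.e.
  have hWr : ∀ᵐ ω ∂μ, ∀ m, 1 ≤ m → r m ≤ W m ω := by
    rw [ae_all_iff]
    intro m
    by_cases hm : 1 ≤ m
    · filter_upwards [hW m hm] with ω h _; exact h
    · exact Eventually.of_forall fun ω h => absurd h hm
  -- final a.e. statement
  have hae : ∀ᵐ ω ∂μ, ∃ M : ℕ, α⁻¹ ≤ ∏ m ∈ Finset.Icc 1 M, E m ω := by
    filter_upwards [hconv, hWr] with ω hcω hWω
    obtain ⟨c, hc⟩ := hcω
    have hc' : Tendsto (fun N : ℕ => ∑ m ∈ Finset.Icc 1 N, (m:ℝ)⁻¹ * D m ω)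
        atTop (nhds c) := hc.congr fun N => by rw [hfeq N]
    have hkron := kron_aux hc'
    set A : ℝ := Real.log α⁻¹ with hA
    have hA0 : 0 ≤ A := Real.log_nonneg (one_le_inv_iff₀.2 ⟨hα0, hα1⟩)
    have hev1 : ∀ᶠ N : ℕ in atTop, -(L/4) < (N:ℝ)⁻¹ * ∑ m ∈ Finset.Icc 1 N, D m ω :=
      hkron.eventually (eventually_gt_nhds (by linarith))
    have hev2 : ∀ᶠ N : ℕ in atTop, (⌈4*A/L⌉₊ ⊔ 1) ≤ N := eventually_ge_atTop _
    obtain ⟨M, hM1, hM2, hM3⟩ := (hfreq.and_eventually (hev1.and hev2)).exists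
    have hM0 : 1 ≤ M := le_trans (le_max_right _ _) hM3
    have hMpos : (0:ℝ) < M := by exact_mod_cast hM0
    have hMA : 4*A/L ≤ (M:ℝ) :=
      le_trans (Nat.le_ceil _) (by exact_mod_cast le_trans (le_max_left _ _) hM3)
    have hrsum : (L/2) * M < ∑ m ∈ Finset.Icc 1 M, r m := by
      have := (mul_lt_mul_of_pos_right hM1 hMpos)
      rw [hu] at this
      calc (L/2) * M < (1 / (M:ℝ) * ∑ m ∈ Finset.Icc 1 M, r m) * M := this
        _ = ∑ m ∈ Finset.Icc 1 M, r m := by field_simp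
    have hDsum : -(L/4) * M < ∑ m ∈ Finset.Icc 1 M, D m ω := by
      have := (mul_lt_mul_of_pos_right hM2 hMpos)
      calc -(L/4) * M < ((M:ℝ)⁻¹ * ∑ m ∈ Finset.Icc 1 M, D m ω) * M := this
        _ = ∑ m ∈ Finset.Icc 1 M, D m ω := by field_simp
    have hsplit : ∑ m ∈ Finset.Icc 1 M, X m ω
        = (∑ m ∈ Finset.Icc 1 M, D m ω) + ∑ m ∈ Finset.Icc 1 M, W m ω := by
      rw [← Finset.sum_add_distrib]
      exact Finset.sum_congr rfl fun m _ => by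
        show X m ω = (X m ω - W m ω) + W m ω
        ring
    have hWsum : ∑ m ∈ Finset.Icc 1 M, r m ≤ ∑ m ∈ Finset.Icc 1 M, W m ω :=
      Finset.sum_le_sum fun m hm => hWω m (Finset.mem_Icc.1 hm).1
    have hS : A ≤ ∑ m ∈ Finset.Icc 1 M, X m ω := by
      have h1 : (L/4) * M ≤ ∑ m ∈ Finset.Icc 1 M, X m ω := by
        rw [hsplit]
        nlinarith
      have h2 : A ≤ (L/4) * M := by
        rw [div_le_iff₀ hL0] at hMA
        nlinarith
      linarith
    refine ⟨M, ?_⟩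
    calc α⁻¹ = Real.exp A := (Real.exp_log (inv_pos.2 hα0)).symm
      _ ≤ Real.exp (∑ m ∈ Finset.Icc 1 M, X m ω) := Real.exp_le_exp.2 hS
      _ = ∏ m ∈ Finset.Icc 1 M, E m ω := by
          rw [Real.exp_sum]
          exact Finset.prod_congr rfl fun m _ => Real.exp_log (hpos m ω)
  -- conclude
  have h1 : ({ω | ∃ M : ℕ, α⁻¹ ≤ ∏ m ∈ Finset.Icc 1 M, E m ω} : Set Ω) =ᵐ[μ] Set.univ :=
    ae_eq_univ.2 (by rw [Set.compl_setOf]; exact ae_iff.mp hae)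
  rw [measure_congr h1, measure_univ]
end

section
/- Let Y be a Bernoulli random variable, and for a sample y₁,…,y_N ∈ {0,1} let q̂ := (Σ yₙ)/N be the MLE of the Bernoulli parameter. Let σ(g(xₙ)) ∈ (0,1) be arbitrary predicted probabilities. Then E(y₁,…,y_N) := ∏ₙ (σ(g(xₙ))/q̂)^{yₙ} ((1−σ(g(xₙ)))/(1−q̂))^{1−yₙ} satisfies E_{P}[E] ≤ 1 for every i.i.d. Bernoulli(q) law P on (Y₁,…,Y_N) with any q ∈ [0,1], where the denominator is the maximized Bernoulli likelihood. -/
open scoped BigOperators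

/-- The Bernoulli MLE `q̂ = (Σ yₙ)/N` for a label vector `y ∈ {0,1}^N`. -/
noncomputable def bernoulliMLE (N : ℕ) (y : Fin N → Bool) : ℝ :=
  (∑ n : Fin N, if y n then (1 : ℝ) else 0) / N

lemma mle_core {a q : ℝ} (N k : ℕ) (hk : k ≤ N) (hN : 0 < N)
    (ha0 : 0 < a) (ha1 : a < 1) (haN : a * N = k) (hq0 : 0 < q) (hq1 : q < 1) :
    q ^ k * (1 - q) ^ (N - k) ≤ a ^ k * (1 - a) ^ (N - k) := by
  have hNpos : (0 : ℝ) < N := by exact_mod_cast hN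
  have hqa : (0:ℝ) ≤ q / a := le_of_lt (div_pos hq0 ha0)
  have hqb : (0:ℝ) ≤ (1 - q) / (1 - a) := le_of_lt (div_pos (by linarith) (by linarith))
  have key : (q / a) ^ a * ((1 - q) / (1 - a)) ^ (1 - a) ≤ 1 := by
    have h := Real.geom_mean_le_arith_mean2_weighted
      (w₁ := a) (w₂ := 1 - a) (p₁ := q / a) (p₂ := (1 - q) / (1 - a))
      (le_of_lt ha0) (by linarith) hqa hqb (by ring)
    have e1 : a * (q / a) = q := by
      rw [mul_comm, div_mul_cancel₀ _ (ne_of_gt ha0)]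
    have e2 : (1 - a) * ((1 - q) / (1 - a)) = 1 - q := by
      rw [mul_comm, div_mul_cancel₀ _ (ne_of_gt (by linarith : (0:ℝ) < 1 - a))]
    rw [e1, e2] at h
    linarith
  have hA0 : (0:ℝ) ≤ (q / a) ^ a * ((1 - q) / (1 - a)) ^ (1 - a) :=
    mul_nonneg (Real.rpow_nonneg hqa _) (Real.rpow_nonneg hqb _)
  have hpow := Real.rpow_le_one hA0 key (Nat.cast_nonneg N)
  have ha1N : (1 - a) * (N : ℝ) = ((N - k : ℕ) : ℝ) := by
    rw [Nat.cast_sub hk, sub_mul, one_mul, haN]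
  rw [Real.mul_rpow (Real.rpow_nonneg hqa _) (Real.rpow_nonneg hqb _),
    ← Real.rpow_mul hqa, ← Real.rpow_mul hqb, haN, ha1N,
    Real.rpow_natCast, Real.rpow_natCast] at hpow
  have hden : (0:ℝ) < a ^ k * (1 - a) ^ (N - k) := by
    apply mul_pos (pow_pos ha0 _) (pow_pos (by linarith) _)
  have hak : a ^ k ≠ 0 := ne_of_gt (pow_pos ha0 _)
  have h1ak : (1 - a) ^ (N - k) ≠ 0 := ne_of_gt (pow_pos (by linarith) _)
  calc q ^ k * (1 - q) ^ (N - k)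
      = ((q / a) ^ k * ((1 - q) / (1 - a)) ^ (N - k)) * (a ^ k * (1 - a) ^ (N - k)) := by
        rw [div_pow, div_pow]; field_simp
    _ ≤ 1 * (a ^ k * (1 - a) ^ (N - k)) :=
        mul_le_mul_of_nonneg_right hpow (le_of_lt hden)
    _ = a ^ k * (1 - a) ^ (N - k) := one_mul _

/-- MLE property: `q̂ = k/N` maximizes the Bernoulli likelihood. -/
lemma mle_bound (N k : ℕ) (hk : k ≤ N) (hN : 0 < N) {q : ℝ} (hq0 : 0 ≤ q) (hq1 : q ≤ 1) :
    q ^ k * (1 - q) ^ (N - k) ≤ ((k : ℝ) / N) ^ k * (1 - (k : ℝ) / N) ^ (N - k) := by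
  have hNpos : (0 : ℝ) < N := by exact_mod_cast hN
  have hkle : (k : ℝ) ≤ N := by exact_mod_cast hk
  have haux : (0:ℝ) ≤ ((k : ℝ) / N) ^ k * (1 - (k : ℝ) / N) ^ (N - k) := by
    apply mul_nonneg (pow_nonneg (by positivity) _)
    apply pow_nonneg
    have := div_le_one_of_le₀ hkle (le_of_lt hNpos)
    linarith
  rcases Nat.eq_zero_or_pos k with hk0 | hkpos
  · subst hk0
    simp only [pow_zero, one_mul, Nat.cast_zero, zero_div, sub_zero, one_pow]
    exact pow_le_one₀ (by linarith) (by linarith)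
  rcases eq_or_lt_of_le hk with hkN | hkN
  · subst hkN
    simp only [Nat.sub_self, pow_zero, mul_one, div_self (ne_of_gt hNpos), one_pow]
    exact pow_le_one₀ hq0 hq1
  rcases eq_or_lt_of_le hq0 with hq0' | hq0'
  · rw [← hq0', zero_pow (Nat.pos_iff_ne_zero.mp hkpos), zero_mul]
    exact haux
  rcases eq_or_lt_of_le hq1 with hq1' | hq1'
  · rw [hq1', sub_self, zero_pow (by omega : N - k ≠ 0), mul_zero]
    exact haux
  exact mle_core N k hk hN (by positivity)
    (by rw [div_lt_one hNpos]; exact_mod_cast hkN)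
    (div_mul_cancel₀ _ (ne_of_gt hNpos)) hq0' hq1'

/-- The E-C2ST e-variable: the ratio of a classifier-based predictive Bernoulli likelihood
`∏ σ(g(xₙ))^{yₙ}(1−σ(g(xₙ)))^{1−yₙ}` to the maximized Bernoulli likelihood
`∏ q̂^{yₙ}(1−q̂)^{1−yₙ}` has expectation at most 1 under every i.i.d. Bernoulli(q) law on the
labels, for any `q ∈ [0,1]`. -/
theorem stmt_14 (N : ℕ) (hN : 0 < N) (σg : Fin N → ℝ)
    (hσ : ∀ n, σg n ∈ Set.Ioo (0 : ℝ) 1) (q : ℝ) (hq : q ∈ Set.Icc (0 : ℝ) 1) :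
    ∑ y : Fin N → Bool,
      (∏ n : Fin N,
          if y n then σg n / bernoulliMLE N y
          else (1 - σg n) / (1 - bernoulliMLE N y)) *
        (∏ n : Fin N, if y n then q else 1 - q) ≤ 1 := by
  obtain ⟨hq0, hq1⟩ := hq
  have hNpos : (0 : ℝ) < N := by exact_mod_cast hN
  have step : ∀ y : Fin N → Bool,
      (∏ n : Fin N,
          if y n then σg n / bernoulliMLE N y
          else (1 - σg n) / (1 - bernoulliMLE N y)) *
        (∏ n : Fin N, if y n then q else 1 - q)
      ≤ ∏ n : Fin N, (if y n then σg n else 1 - σg n) := by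
    intro y
    classical
    set T : Finset (Fin N) := Finset.univ.filter (fun n => y n = true) with hT
    set k : ℕ := T.card with hk
    have hkc : (Finset.univ.filter (fun n => y n = true)).card = k := rfl
    have hkN : k ≤ N := by
      rw [hk, hT]
      simpa using Finset.card_filter_le Finset.univ (fun n => y n = true)
    have hcard : (Finset.univ.filter (fun n => ¬ y n = true)).card = N - k := by
      have h2 := Finset.card_filter_add_card_filter_not
        (s := (Finset.univ : Finset (Fin N))) (p := fun n => y n = true)
      simp only [Finset.card_univ, Fintype.card_fin, hkc] at h2
      omega
    have hmle : bernoulliMLE N y = (k : ℝ) / N := by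
      unfold bernoulliMLE
      congr 1
      rw [Finset.sum_boole, hkc]
    set a : ℝ := (k : ℝ) / N with ha_def
    have hkleR : (k : ℝ) ≤ N := by exact_mod_cast hkN
    have ha0 : 0 ≤ a := div_nonneg (Nat.cast_nonneg _) (le_of_lt hNpos)
    have ha1 : a ≤ 1 := by rw [ha_def, div_le_one hNpos]; exact hkleR
    have hden : (0:ℝ) < a ^ k * (1 - a) ^ (N - k) := by
      apply mul_pos
      · rcases Nat.eq_zero_or_pos k with h | h
        · simp [h]
        · exact pow_pos (by rw [ha_def]; apply div_pos (by exact_mod_cast h) hNpos) _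
      · rcases Nat.eq_or_lt_of_le hkN with h | h
        · simp [h]
        · apply pow_pos
          have hlt : (k:ℝ) < N := by exact_mod_cast h
          have : a < 1 := by rw [ha_def, div_lt_one hNpos]; exact hlt
          linarith
    have hmleb : q ^ k * (1 - q) ^ (N - k) ≤ a ^ k * (1 - a) ^ (N - k) := by
      rw [ha_def]; exact mle_bound N k hkN hN hq0 hq1
    clear_value a
    have hprod_ratio : (∏ n : Fin N,
          if y n then σg n / bernoulliMLE N y
          else (1 - σg n) / (1 - bernoulliMLE N y))
        = ((∏ n ∈ T, σg n) * (∏ n ∈ Finset.univ.filter (fun n => ¬ y n = true), (1 - σg n)))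
          / (a ^ k * (1 - a) ^ (N - k)) := by
      rw [hmle, Finset.prod_ite, Finset.prod_div_distrib, Finset.prod_div_distrib,
        Finset.prod_const, Finset.prod_const]
      simp only [hkc, hcard]
      rw [div_mul_div_comm]
    have hprod_q : (∏ n : Fin N, if y n then q else 1 - q)
        = q ^ k * (1 - q) ^ (N - k) := by
      rw [Finset.prod_ite, Finset.prod_const, Finset.prod_const]
      simp only [hkc, hcard]
    have hprod_s : (∏ n : Fin N, (if y n then σg n else 1 - σg n))
        = (∏ n ∈ T, σg n) * (∏ n ∈ Finset.univ.filter (fun n => ¬ y n = true), (1 - σg n)) := by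
      rw [Finset.prod_ite]
    have hS : 0 ≤ (∏ n ∈ T, σg n) *
        (∏ n ∈ Finset.univ.filter (fun n => ¬ y n = true), (1 - σg n)) := by
      apply mul_nonneg <;> apply Finset.prod_nonneg <;> intro n _
      · exact le_of_lt (hσ n).1
      · have := (hσ n).2; linarith
    rw [hprod_ratio, hprod_q, hprod_s]
    rw [div_mul_eq_mul_div, div_le_iff₀ hden]
    calc (∏ n ∈ T, σg n) *
          (∏ n ∈ Finset.univ.filter (fun n => ¬ y n = true), (1 - σg n)) *
          (q ^ k * (1 - q) ^ (N - k))
        ≤ (∏ n ∈ T, σg n) *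
          (∏ n ∈ Finset.univ.filter (fun n => ¬ y n = true), (1 - σg n)) *
          (a ^ k * (1 - a) ^ (N - k)) := mul_le_mul_of_nonneg_left hmleb hS
      _ = _ := by ring
  calc ∑ y : Fin N → Bool,
        (∏ n : Fin N,
            if y n then σg n / bernoulliMLE N y
            else (1 - σg n) / (1 - bernoulliMLE N y)) *
          (∏ n : Fin N, if y n then q else 1 - q)
      ≤ ∑ y : Fin N → Bool, ∏ n : Fin N, (if y n then σg n else 1 - σg n) :=
        Finset.sum_le_sum (fun y _ => step y)
    _ = ∏ n : Fin N, ∑ b : Bool, (if b then σg n else 1 - σg n) := by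
        rw [← Fintype.piFinset_univ]
        exact Finset.sum_prod_piFinset Finset.univ (fun n b => if b = true then σg n else 1 - σg n)
    _ = 1 := by
        apply Finset.prod_eq_one
        intro n _
        simp
end
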